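/- Let G be a group generated by two elements g, h, written as 𝐅₂/N, and let w ∈ N. Consider the ℤ-linear map D: ℤ[G] ⊕ ℤ[G] → ℤ[G] sending (g⊗1, 0) ↦ π(∂w/∂x)* and (0, h⊗1) ↦ π(∂w/∂y)*, where π: ℤ[𝐅₂] → ℤ[G] is induced by the quotient and * is the involution of the group ring. Then D is the zero map if and only if w ∈ [N, N]. -/

import Mathlib

open MonoidAlgebra
open scoped commutatorElement

namespace FoxAux15

abbrev F2 := FreeGroup (Fin 2)

section Dgen

variable (D : F2 → MonoidAlgebra ℤ F2)
  (hmul : ∀ u v, D (u * v) = D u + MonoidAlgebra.of ℤ F2 u * D v)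

include hmul

lemma D_one : D 1 = 0 := by
  have h := hmul 1 1
  rw [one_mul, map_one, one_mul] at h
  exact (left_eq_add.mp h)

lemma D_inv (u : F2) : D u⁻¹ = -(MonoidAlgebra.of ℤ F2 u⁻¹ * D u) := by
  have h := hmul u u⁻¹
  rw [mul_inv_cancel, D_one D hmul] at h
  have h1 : MonoidAlgebra.of ℤ F2 u⁻¹ * MonoidAlgebra.of ℤ F2 u = 1 := by
    rw [← map_mul, inv_mul_cancel, map_one]
  have h2 : MonoidAlgebra.of ℤ F2 u * D u⁻¹ = - D u := by
    linear_combination (norm := noncomm_ring) -h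
  calc D u⁻¹ = (MonoidAlgebra.of ℤ F2 u⁻¹ * MonoidAlgebra.of ℤ F2 u) * D u⁻¹ := by
        rw [h1, one_mul]
    _ = MonoidAlgebra.of ℤ F2 u⁻¹ * (MonoidAlgebra.of ℤ F2 u * D u⁻¹) := by
        rw [mul_assoc]
    _ = -(MonoidAlgebra.of ℤ F2 u⁻¹ * D u) := by rw [h2]; noncomm_ring

end Dgen

section Fox

variable (Dx Dy : F2 → MonoidAlgebra ℤ F2)
    (hDx0 : Dx (FreeGroup.of 0) = 1) (hDx1 : Dx (FreeGroup.of 1) = 0)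
    (hDxmul : ∀ u v, Dx (u * v) = Dx u + MonoidAlgebra.of ℤ F2 u * Dx v)
    (hDy0 : Dy (FreeGroup.of 0) = 0) (hDy1 : Dy (FreeGroup.of 1) = 1)
    (hDymul : ∀ u v, Dy (u * v) = Dy u + MonoidAlgebra.of ℤ F2 u * Dy v)

include hDx0 hDx1 hDxmul hDy0 hDy1 hDymul

lemma fox_identity (u : F2) :
    MonoidAlgebra.of ℤ F2 u - 1 =
      Dx u * (MonoidAlgebra.of ℤ F2 (FreeGroup.of 0) - 1) +
      Dy u * (MonoidAlgebra.of ℤ F2 (FreeGroup.of 1) - 1) := by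
  induction u using FreeGroup.induction_on with
  | C1 => rw [D_one Dx hDxmul, D_one Dy hDymul, map_one]; noncomm_ring
  | of i =>
      rcases (by omega : i = 0 ∨ i = 1) with rfl | rfl
      · rw [hDx0, hDy0]; noncomm_ring
      · rw [hDx1, hDy1]; noncomm_ring
  | inv_of i ih =>
      set u := FreeGroup.of i
      have h1 : MonoidAlgebra.of ℤ F2 u⁻¹ * MonoidAlgebra.of ℤ F2 u = 1 := by
        rw [← map_mul, inv_mul_cancel, map_one]
      rw [D_inv Dx hDxmul, D_inv Dy hDymul]
      have key : (-(MonoidAlgebra.of ℤ F2 u⁻¹ * Dx u)) *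
            (MonoidAlgebra.of ℤ F2 (FreeGroup.of 0) - 1) +
          (-(MonoidAlgebra.of ℤ F2 u⁻¹ * Dy u)) *
            (MonoidAlgebra.of ℤ F2 (FreeGroup.of 1) - 1) =
          -(MonoidAlgebra.of ℤ F2 u⁻¹ *
            (Dx u * (MonoidAlgebra.of ℤ F2 (FreeGroup.of 0) - 1) +
             Dy u * (MonoidAlgebra.of ℤ F2 (FreeGroup.of 1) - 1))) := by noncomm_ring
      rw [key, ← ih, mul_sub, h1, mul_one, neg_sub]
  | mul u v ihu ihv =>
      rw [hDxmul, hDymul, map_mul]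
      have key : (Dx u + MonoidAlgebra.of ℤ F2 u * Dx v) *
            (MonoidAlgebra.of ℤ F2 (FreeGroup.of 0) - 1) +
          (Dy u + MonoidAlgebra.of ℤ F2 u * Dy v) *
            (MonoidAlgebra.of ℤ F2 (FreeGroup.of 1) - 1) =
          (Dx u * (MonoidAlgebra.of ℤ F2 (FreeGroup.of 0) - 1) +
             Dy u * (MonoidAlgebra.of ℤ F2 (FreeGroup.of 1) - 1)) +
          MonoidAlgebra.of ℤ F2 u *
            (Dx v * (MonoidAlgebra.of ℤ F2 (FreeGroup.of 0) - 1) +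
             Dy v * (MonoidAlgebra.of ℤ F2 (FreeGroup.of 1) - 1)) := by noncomm_ring
      rw [key, ← ihu, ← ihv]
      noncomm_ring

end Fox

section Pi

variable (N : Subgroup F2) [N.Normal]

noncomputable abbrev piN : MonoidAlgebra ℤ F2 →+* MonoidAlgebra ℤ (F2 ⧸ N) :=
  MonoidAlgebra.mapDomainRingHom ℤ (QuotientGroup.mk' N)

lemma piN_of (f : F2) :
    piN N (MonoidAlgebra.of ℤ F2 f) =
      MonoidAlgebra.of ℤ (F2 ⧸ N) (QuotientGroup.mk f) := by
  simp [MonoidAlgebra.of_apply, Finsupp.mapDomain_single]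

lemma piN_of_mem {m : F2} (hm : m ∈ N) : piN N (MonoidAlgebra.of ℤ F2 m) = 1 := by
  rw [piN_of, (QuotientGroup.eq_one_iff m).mpr hm, map_one]

section DN

variable (D : F2 → MonoidAlgebra ℤ F2)
  (hmul : ∀ u v, D (u * v) = D u + MonoidAlgebra.of ℤ F2 u * D v)

include hmul

lemma piN_D_mul_mem {m : F2} (hm : m ∈ N) (v : F2) :
    piN N (D (m * v)) = piN N (D m) + piN N (D v) := by
  rw [hmul, map_add, map_mul, piN_of_mem N hm, one_mul]

lemma piN_D_inv_mem {m : F2} (hm : m ∈ N) :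
    piN N (D m⁻¹) = - piN N (D m) := by
  rw [D_inv D hmul, map_neg, map_mul, piN_of_mem N (inv_mem hm), one_mul]

lemma piN_D_commutator {m n : F2} (hm : m ∈ N) (hn : n ∈ N) :
    piN N (D ⁅m, n⁆) = 0 := by
  rw [commutatorElement_def, mul_assoc, mul_assoc,
    piN_D_mul_mem N D hmul hm, piN_D_mul_mem N D hmul hn,
    piN_D_mul_mem N D hmul (inv_mem hm),
    piN_D_inv_mem N D hmul hm, piN_D_inv_mem N D hmul hn]
  abel

lemma piN_D_zero_of_mem_commutator {w : F2} (hw : w ∈ ⁅N, N⁆) :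
    piN N (D w) = 0 := by
  rw [Subgroup.commutator_def] at hw
  induction hw using Subgroup.closure_induction with
  | mem x hx =>
      obtain ⟨m, hm, n, hn, rfl⟩ := hx
      exact piN_D_commutator N D hmul hm hn
  | one => rw [D_one D hmul, map_zero]
  | mul x y hx hy ihx ihy =>
      rw [hmul, map_add, map_mul, ihx, ihy, mul_zero, add_zero]
  | inv x hx ihx =>
      rw [D_inv D hmul, map_neg, map_mul, ihx, mul_zero, neg_zero]

end DN

end Pi

section Hard

variable (N : Subgroup F2) [N.Normal]

lemma mk_out (q : F2 ⧸ N) : (QuotientGroup.mk (Quotient.out q) : F2 ⧸ N) = q :=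
  QuotientGroup.out_eq' q

lemma nrep_mem (f : F2) :
    f * (Quotient.out (QuotientGroup.mk f : F2 ⧸ N))⁻¹ ∈ N := by
  rw [← QuotientGroup.eq_one_iff, QuotientGroup.mk_mul, QuotientGroup.mk_inv,
    mk_out, mul_inv_cancel]

/-- `n_f` with `f = n_f ⋅ t(f)`, `t(f)` the chosen coset representative. -/
noncomputable def nrep (f : F2) : N :=
  ⟨f * (Quotient.out (QuotientGroup.mk f : F2 ⧸ N))⁻¹, nrep_mem N f⟩

lemma nrep_out (f : F2) :
    nrep N (Quotient.out (QuotientGroup.mk f : F2 ⧸ N)) = 1 := by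
  apply Subtype.ext
  show _ * _ = (1 : F2)
  rw [mk_out, mul_inv_cancel]

lemma nrep_key (f v : F2) :
    nrep N (f * v) =
      nrep N f * nrep N (Quotient.out (QuotientGroup.mk f : F2 ⧸ N) * v) := by
  apply Subtype.ext
  show f * v * _ = (f * _⁻¹) * (_ * v * _)
  rw [show (QuotientGroup.mk (Quotient.out (QuotientGroup.mk f : F2 ⧸ N) * v) : F2 ⧸ N)
      = QuotientGroup.mk (f * v) by rw [QuotientGroup.mk_mul, QuotientGroup.mk_mul, mk_out]]
  group

/-- The ℤ-linear "relabelling" map `ℤ[F₂] → N^{ab}`, `f ↦ [n_f]`. -/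
noncomputable def rho : MonoidAlgebra ℤ F2 →ₗ[ℤ] Additive (Abelianization N) :=
  Finsupp.linearCombination ℤ (fun f => Additive.ofMul (Abelianization.of (nrep N f))) ∘ₗ
    (MonoidAlgebra.coeffLinearEquiv ℤ).toLinearMap

lemma rho_of (f : F2) :
    rho N (MonoidAlgebra.of ℤ F2 f) = Additive.ofMul (Abelianization.of (nrep N f)) := by
  show Finsupp.linearCombination ℤ _ (MonoidAlgebra.of ℤ F2 f).coeff = _
  rw [MonoidAlgebra.of_apply, MonoidAlgebra.coeff_single, Finsupp.linearCombination_single,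
    one_smul]

lemma rho_of_mul (f v : F2) :
    rho N (MonoidAlgebra.of ℤ F2 f * (MonoidAlgebra.of ℤ F2 v - 1)) =
      Additive.ofMul (Abelianization.of (nrep N (f * v))) -
      Additive.ofMul (Abelianization.of (nrep N f)) := by
  rw [mul_sub, mul_one, ← map_mul, map_sub, rho_of, rho_of]

lemma rho_indep (f v : F2) :
    rho N (MonoidAlgebra.of ℤ F2 f * (MonoidAlgebra.of ℤ F2 v - 1)) =
      rho N (MonoidAlgebra.of ℤ F2 (Quotient.out (QuotientGroup.mk f : F2 ⧸ N)) *
        (MonoidAlgebra.of ℤ F2 v - 1)) := by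
  rw [rho_of_mul, rho_of_mul, nrep_key N f v, nrep_out N f,
    map_mul, ofMul_mul, map_one, ofMul_one]
  abel

lemma rho_ker (v : F2) (z : MonoidAlgebra ℤ F2) (hz : piN N z = 0) :
    rho N (z * (MonoidAlgebra.of ℤ F2 v - 1)) = 0 := by
  have main : ∀ z : MonoidAlgebra ℤ F2,
      rho N (z * (MonoidAlgebra.of ℤ F2 v - 1)) =
        Finsupp.linearCombination ℤ
          (fun g : F2 ⧸ N => rho N (MonoidAlgebra.of ℤ F2 (Quotient.out g) *
            (MonoidAlgebra.of ℤ F2 v - 1))) (piN N z).coeff := by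
    intro z
    induction z using MonoidAlgebra.induction_linear with
    | zero => rw [zero_mul, map_zero, map_zero, MonoidAlgebra.coeff_zero, map_zero]
    | add a b iha ihb => rw [add_mul, map_add, map_add, MonoidAlgebra.coeff_add, map_add, iha, ihb]
    | single f b =>
        have hsm : (MonoidAlgebra.single f b : MonoidAlgebra ℤ F2) =
            b • MonoidAlgebra.of ℤ F2 f := by
          rw [MonoidAlgebra.of_apply, MonoidAlgebra.smul_single, smul_eq_mul, mul_one]
        have hπ : (piN N (MonoidAlgebra.single f b)).coeff =
            Finsupp.single (QuotientGroup.mk f : F2 ⧸ N) b := by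
          show (MonoidAlgebra.mapDomain _ (MonoidAlgebra.single f b)).coeff = _
          rw [MonoidAlgebra.mapDomain_single]; rfl
        rw [hπ, Finsupp.linearCombination_single, hsm, smul_mul_assoc, map_smul,
          rho_indep N f v]
  rw [main, hz, MonoidAlgebra.coeff_zero, map_zero]

lemma nrep_w {w : F2} (hw : w ∈ N) : nrep N w = ⟨w, hw⟩ * nrep N 1 := by
  apply Subtype.ext
  show w * _⁻¹ = w * (1 * _⁻¹)
  rw [show (QuotientGroup.mk w : F2 ⧸ N) = QuotientGroup.mk 1 by
    rw [QuotientGroup.mk_one, (QuotientGroup.eq_one_iff w).mpr hw]]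
  group

lemma mem_commutator_of_rho_zero {w : F2} (hw : w ∈ N)
    (key : rho N (MonoidAlgebra.of ℤ F2 w - 1) = 0) : w ∈ ⁅N, N⁆ := by
  rw [show (1 : MonoidAlgebra ℤ F2) = MonoidAlgebra.of ℤ F2 1 from (map_one _).symm,
    map_sub, rho_of, rho_of, nrep_w N hw, map_mul, ofMul_mul,
    add_sub_cancel_right] at key
  have h1 : Abelianization.of (⟨w, hw⟩ : N) = 1 := by
    have := congrArg Additive.toMul key
    simpa using this
  have hcomm : (⟨w, hw⟩ : N) ∈ commutator ↥N := by
    rw [← QuotientGroup.eq_one_iff (⟨w, hw⟩ : N)]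
    exact h1
  have hmap : ((⟨w, hw⟩ : N) : F2) ∈ Subgroup.map N.subtype (commutator ↥N) :=
    Subgroup.mem_map_of_mem _ hcomm
  rwa [commutator, Subgroup.map_commutator, ← MonoidHom.range_eq_map,
    Subgroup.range_subtype] at hmap

lemma equivMapDomain_zero_iff {l : MonoidAlgebra ℤ (F2 ⧸ N)} :
    Finsupp.equivMapDomain (Equiv.inv (F2 ⧸ N)) l.coeff = 0 ↔ l = 0 := by
  constructor
  · intro h
    ext a
    have h2 := DFunLike.congr_fun h ((Equiv.inv (F2 ⧸ N)) a)
    rw [Finsupp.equivMapDomain_apply] at h2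
    simpa using h2
  · rintro rfl
    exact Finsupp.equivMapDomain_zero

end Hard



end FoxAux15

open FoxAux15 in
/-- Let `G = 𝐅₂/N` with `w ∈ N`, and let `∂/∂x, ∂/∂y` be the Fox
derivatives on `𝐅₂ = ⟨x,y⟩` (characterized by their values on the generators and the
product rule). The map `D` sending the two generators to `π(∂w/∂x)*` and `π(∂w/∂y)*`
(where `π : ℤ[𝐅₂] → ℤ[G]` is induced by the quotient and `*` is the involution of the
group ring) is zero if and only if `w ∈ [N, N]`. -/
theorem fox_codifferential_zero_iff_mem_commutator
    (N : Subgroup (FreeGroup (Fin 2))) [N.Normal]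
    (w : FreeGroup (Fin 2)) (hw : w ∈ N)
    (Dx Dy : FreeGroup (Fin 2) → MonoidAlgebra ℤ (FreeGroup (Fin 2)))
    (hDx0 : Dx (FreeGroup.of 0) = 1) (hDx1 : Dx (FreeGroup.of 1) = 0)
    (hDxmul : ∀ u v, Dx (u * v) =
      Dx u + MonoidAlgebra.of ℤ (FreeGroup (Fin 2)) u * Dx v)
    (hDy0 : Dy (FreeGroup.of 0) = 0) (hDy1 : Dy (FreeGroup.of 1) = 1)
    (hDymul : ∀ u v, Dy (u * v) =
      Dy u + MonoidAlgebra.of ℤ (FreeGroup (Fin 2)) u * Dy v) :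
    (Finsupp.equivMapDomain (Equiv.inv (FreeGroup (Fin 2) ⧸ N))
        (MonoidAlgebra.mapDomainRingHom ℤ (QuotientGroup.mk' N) (Dx w)).coeff = 0 ∧
     Finsupp.equivMapDomain (Equiv.inv (FreeGroup (Fin 2) ⧸ N))
        (MonoidAlgebra.mapDomainRingHom ℤ (QuotientGroup.mk' N) (Dy w)).coeff = 0) ↔
      w ∈ ⁅N, N⁆ := by
  rw [equivMapDomain_zero_iff N, equivMapDomain_zero_iff N]
  constructor
  · rintro ⟨hx, hy⟩
    apply mem_commutator_of_rho_zero N hw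
    rw [fox_identity Dx Dy hDx0 hDx1 hDxmul hDy0 hDy1 hDymul w, map_add,
      rho_ker N _ _ hx, rho_ker N _ _ hy, add_zero]
  · intro hcw
    exact ⟨piN_D_zero_of_mem_commutator N Dx hDxmul hcw,
      piN_D_zero_of_mem_commutator N Dy hDymul hcw⟩
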